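/- arXiv:2209.15482 — 3 statements merged into one kernel-verified Lean document; each statement's English description precedes it below -/
import Mathlib

section
/- Define a real sequence (α_n)_{n≥0} by α_0 = 1 and α_{n+1} = (2/(2n+3)) · ∑_{k=0}^{n} α_k α_{n-k}. Then for every real s with |s| < π/(2√2), the series ∑_{n=0}^{∞} α_n s^{2n+1} converges and its sum equals (1/√2) · tan(√2 · s). -/
set_option maxHeartbeats 1000000

open Real Filter Metric Finset Topology

namespace AdomianAux

variable {α : ℕ → ℝ}

lemma alpha_bdd (h0 : α 0 = 1)
    (hrec : ∀ n : ℕ, α (n + 1)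
      = (2 / (2 * (n : ℝ) + 3)) * ∑ k ∈ Finset.range (n + 1), α k * α (n - k)) :
    ∀ n, 0 ≤ α n ∧ α n ≤ 1 := by
  intro n
  induction n using Nat.strong_induction_on with
  | _ n ih =>
    match n with
    | 0 => simp [h0]
    | (m + 1) =>
      have hsum0 : 0 ≤ ∑ k ∈ Finset.range (m + 1), α k * α (m - k) :=
        Finset.sum_nonneg fun k hk => by
          simp only [Finset.mem_range] at hk
          exact mul_nonneg (ih k (by omega)).1 (ih (m - k) (by omega)).1
      have hsum1 : ∑ k ∈ Finset.range (m + 1), α k * α (m - k) ≤ (m + 1 : ℝ) := by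
        have hle : ∀ k ∈ Finset.range (m + 1), α k * α (m - k) ≤ 1 := by
          intro k hk
          simp only [Finset.mem_range] at hk
          have h1 := ih k (by omega)
          have h2 := ih (m - k) (by omega)
          nlinarith [h1.1, h1.2, h2.1, h2.2]
        calc ∑ k ∈ Finset.range (m + 1), α k * α (m - k)
            ≤ ∑ _k ∈ Finset.range (m + 1), (1 : ℝ) := Finset.sum_le_sum hle
          _ = (m + 1 : ℝ) := by simp
      have h3 : (0:ℝ) < 2 * (m:ℝ) + 3 := by positivity
      rw [hrec m]
      constructor
      · exact mul_nonneg (by positivity) hsum0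
      · rw [div_mul_eq_mul_div, div_le_one h3]
        nlinarith

lemma summable_norm_alpha (hb : ∀ n, |α n| ≤ 1) {s : ℝ} (hs : |s| < 1) :
    Summable (fun n => ‖α n * s ^ (2*n+1)‖) := by
  have hsq : s^2 < 1 := by nlinarith [sq_abs s, abs_nonneg s]
  refine Summable.of_nonneg_of_le (fun n => norm_nonneg _) (fun n => ?_)
    (summable_geometric_of_lt_one (by positivity) hsq)
  rw [Real.norm_eq_abs, abs_mul, abs_pow]
  have h1 : |s| ^ (2*n+1) ≤ (s^2)^n := by
    have e : (s^2)^n = |s| ^ (2*n) := by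
      rw [← sq_abs, ← pow_mul]
    rw [e, pow_succ]
    exact mul_le_of_le_one_right (pow_nonneg (abs_nonneg s) _) hs.le
  calc |α n| * |s| ^ (2*n+1) ≤ 1 * (s^2)^n :=
        mul_le_mul (hb n) h1 (by positivity) one_pos.le
    _ = (s^2)^n := one_mul _

lemma hasDerivAt_gsum (hb : ∀ n, |α n| ≤ 1) (h0 : α 0 = 1)
    (hrec : ∀ n : ℕ, α (n + 1)
      = (2 / (2 * (n : ℝ) + 3)) * ∑ k ∈ Finset.range (n + 1), α k * α (n - k))
    {s : ℝ} (hs : |s| < 1) :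
    HasDerivAt (fun x => ∑' n, α n * x ^ (2*n+1))
      (1 + 2 * ((∑' n, α n * s ^ (2*n+1)) * (∑' n, α n * s ^ (2*n+1)))) s := by
  set r : ℝ := (|s| + 1) / 2 with hrdef
  have h0r : 0 ≤ |s| := abs_nonneg s
  have hsr : |s| < r := by rw [hrdef]; linarith
  have hr1 : r < 1 := by rw [hrdef]; linarith
  have hr0 : 0 < r := by positivity
  have hrsq : r^2 < 1 := by nlinarith
  have hu : Summable (fun n : ℕ => (2*(n:ℝ)+1) * (r^2)^n) := by
    have h1 := summable_pow_mul_geometric_of_norm_lt_one 1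
      (by rw [Real.norm_eq_abs, abs_of_nonneg (by positivity)]; exact hrsq : ‖r^2‖ < 1)
    have h2 := summable_geometric_of_lt_one (show (0:ℝ) ≤ r^2 by positivity) hrsq
    have h3 := (h1.mul_left 2).add h2
    convert h3 using 1
    · exact rfl
    funext n
    push_cast
    ring
  have hsmem : s ∈ Set.Ioo (-r) r := by
    rw [Set.mem_Ioo]
    constructor
    · linarith [neg_abs_le s]
    · linarith [le_abs_self s]
  have hderiv : ∀ (n : ℕ), ∀ y ∈ Set.Ioo (-r) r,
      HasDerivAt (fun x => α n * x ^ (2*n+1)) (α n * (((2*n+1 : ℕ) : ℝ) * y ^ (2*n))) y := by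
    intro n y _
    have h := (hasDerivAt_pow (2*n+1) y).const_mul (α n)
    simpa [Nat.add_sub_cancel] using h
  have hbound : ∀ (n : ℕ), ∀ y ∈ Set.Ioo (-r) r,
      ‖α n * (((2*n+1 : ℕ) : ℝ) * y ^ (2*n))‖ ≤ (2*(n:ℝ)+1) * (r^2)^n := by
    intro n y hy
    have hyr : |y| ≤ r := by
      rw [abs_le]; exact ⟨hy.1.le, hy.2.le⟩
    have hy2 : |y|^2 ≤ r^2 := by nlinarith [abs_nonneg y]
    rw [Real.norm_eq_abs, abs_mul, abs_mul, abs_pow]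
    have h1 : |y|^(2*n) ≤ (r^2)^n := by
      rw [pow_mul]
      exact pow_le_pow_left₀ (by positivity) hy2 n
    have h2 : |((2*n+1 : ℕ) : ℝ)| = 2*(n:ℝ)+1 := by
      rw [abs_of_nonneg (by positivity)]; push_cast; ring
    rw [h2]
    calc |α n| * ((2*(n:ℝ)+1) * |y|^(2*n)) ≤ 1 * ((2*(n:ℝ)+1) * (r^2)^n) := by
          apply mul_le_mul (hb n) _ (by positivity) one_pos.le
          apply mul_le_mul_of_nonneg_left h1 (by positivity)
      _ = (2*(n:ℝ)+1) * (r^2)^n := one_mul _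
  have hg0 : Summable (fun n => α n * s ^ (2*n+1)) :=
    (summable_norm_alpha hb hs).of_norm
  have hmain := hasDerivAt_tsum_of_isPreconnected hu (isOpen_Ioo (a := -r) (b := r))
      (convex_Ioo (-r) r).isPreconnected hderiv hbound hsmem hg0 hsmem
  -- now identify the sum of derivatives
  set F : ℕ → ℝ := fun n => α n * s ^ (2*n+1) with hF
  have hnorm : Summable (fun n => ‖F n‖) := summable_norm_alpha hb hs
  have hcauchy : HasSum (fun n => ∑ k ∈ Finset.range (n+1), F k * F (n-k))
      ((∑' n, F n) * (∑' n, F n)) :=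
    hasSum_sum_range_mul_of_summable_norm hnorm hnorm
  have hterm : ∀ n : ℕ, ∑ k ∈ Finset.range (n+1), F k * F (n-k)
      = ((2*(n:ℝ)+3)/2 * α (n+1)) * s ^ (2*n+2) := by
    intro n
    have h3 : (2*(n:ℝ)+3) ≠ 0 := by positivity
    have hS : ∑ k ∈ Finset.range (n+1), α k * α (n - k) = (2*(n:ℝ)+3)/2 * α (n+1) := by
      rw [hrec n]
      field_simp
    calc ∑ k ∈ Finset.range (n+1), F k * F (n-k)
        = ∑ k ∈ Finset.range (n+1), (α k * α (n-k)) * s ^ (2*n+2) := by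
          apply Finset.sum_congr rfl
          intro k hk
          simp only [Finset.mem_range] at hk
          have he : (2*k+1) + (2*(n-k)+1) = 2*n+2 := by omega
          rw [hF]
          simp only []
          rw [mul_mul_mul_comm, ← pow_add, he]
      _ = (∑ k ∈ Finset.range (n+1), α k * α (n-k)) * s ^ (2*n+2) := by
          rw [← Finset.sum_mul]
      _ = ((2*(n:ℝ)+3)/2 * α (n+1)) * s ^ (2*n+2) := by rw [hS]
  have hcauchy2 : HasSum (fun n : ℕ => (2*(n:ℝ)+3) * α (n+1) * s ^ (2*n+2))
      (2 * ((∑' n, F n) * (∑' n, F n))) := by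
    have h2 := hcauchy.mul_left 2
    convert h2 using 1
    · exact rfl
    funext n
    rw [hterm n]
    ring
  have hsum_deriv : Summable (fun n => α n * (((2*n+1 : ℕ):ℝ) * s ^ (2*n))) := by
    apply Summable.of_norm
    exact Summable.of_nonneg_of_le (fun n => norm_nonneg _) (fun n => hbound n s hsmem) hu
  have htsum : (∑' n, α n * (((2*n+1 : ℕ):ℝ) * s ^ (2*n)))
      = 1 + 2 * ((∑' n, F n) * (∑' n, F n)) := by
    rw [Summable.tsum_eq_zero_add hsum_deriv]
    congr 1
    · simp [h0]
    · rw [← hcauchy2.tsum_eq]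
      apply tsum_congr
      intro n
      push_cast
      ring
  rw [← htsum]
  exact hmain

lemma gsum_eq (hb : ∀ n, |α n| ≤ 1) (h0 : α 0 = 1)
    (hrec : ∀ n : ℕ, α (n + 1)
      = (2 / (2 * (n : ℝ) + 3)) * ∑ k ∈ Finset.range (n + 1), α k * α (n - k))
    {x : ℝ} (hx : |x| < 1) :
    (∑' n, α n * x ^ (2*n+1)) = (Real.sqrt 2)⁻¹ * Real.tan (Real.sqrt 2 * x) := by
  set g : ℝ → ℝ := fun y => ∑' n, α n * y ^ (2*n+1) with hg
  have hs2 : (0:ℝ) < Real.sqrt 2 := Real.sqrt_pos.mpr (by norm_num)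
  have hsq : (Real.sqrt 2) ^ 2 = 2 := Real.sq_sqrt (by norm_num)
  have hgd : ∀ y ∈ Set.Ioo (-1:ℝ) 1, HasDerivAt g (1 + 2 * (g y * g y)) y := by
    intro y hy
    have : |y| < 1 := abs_lt.mpr ⟨hy.1, hy.2⟩
    exact hasDerivAt_gsum hb h0 hrec this
  set H : ℝ → ℝ := fun y => Real.arctan (Real.sqrt 2 * g y) - Real.sqrt 2 * y with hH
  have hHd : ∀ y ∈ Set.Ioo (-1:ℝ) 1, HasDerivAt H 0 y := by
    intro y hy
    have h1 := hgd y hy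
    have h2 : HasDerivAt (fun z => Real.sqrt 2 * g z)
        (Real.sqrt 2 * (1 + 2 * (g y * g y))) y := h1.const_mul _
    have h3 := (Real.hasDerivAt_arctan (Real.sqrt 2 * g y)).comp y h2
    have h4 : HasDerivAt (fun z => Real.sqrt 2 * z) (Real.sqrt 2) y := by
      simpa using (hasDerivAt_id y).const_mul (Real.sqrt 2)
    have h5 := h3.sub h4
    convert h5 using 1
    · exact rfl
    · exact rfl
    · exact rfl
    have he : (Real.sqrt 2 * g y)^2 = 2 * (g y * g y) := by
      rw [mul_pow, hsq]; ring
    rw [he]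
    have hne : (1 + 2 * (g y * g y)) ≠ 0 := by nlinarith [mul_self_nonneg (g y)]
    field_simp
    ring
  have hx' : x ∈ Set.Ioo (-1:ℝ) 1 := ⟨(abs_lt.mp hx).1, (abs_lt.mp hx).2⟩
  have h0mem : (0:ℝ) ∈ Set.Ioo (-1:ℝ) 1 := by norm_num
  have hcst : H x = H 0 := by
    apply (convex_Ioo (-1:ℝ) 1).is_const_of_fderivWithin_eq_zero (𝕜 := ℝ)
      (fun y hy => ((hHd y hy).differentiableAt).differentiableWithinAt) ?_ hx' h0mem
    intro y hy
    rw [fderivWithin_of_isOpen isOpen_Ioo hy]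
    have hfd : HasFDerivAt H (0 : ℝ →L[ℝ] ℝ) y := by
      have := (hHd y hy).hasFDerivAt
      rwa [show ContinuousLinearMap.toSpanSingleton ℝ (0:ℝ) = 0 by ext z; simp] at this
    exact hfd.fderiv
  have hg0 : g 0 = 0 := by
    rw [hg]
    have hz : ∀ n : ℕ, α n * (0:ℝ) ^ (2*n+1) = 0 := by
      intro n
      rw [zero_pow (by omega), mul_zero]
    simp only [hz]
    exact tsum_zero
  have harc : Real.arctan (Real.sqrt 2 * g x) = Real.sqrt 2 * x := by
    have : H x = 0 := by
      rw [hcst, hH]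
      simp [hg0]
    rw [hH] at this
    simp only [] at this
    linarith [this]
  have := congrArg Real.tan harc
  rw [Real.tan_arctan] at this
  rw [show (∑' n, α n * x ^ (2*n+1)) = g x from rfl]
  rw [inv_mul_eq_div, eq_div_iff hs2.ne']
  linarith [this]

end AdomianAux

open Real

theorem adomian_series_tan (α : ℕ → ℝ) (h0 : α 0 = 1)
    (hrec : ∀ n : ℕ, α (n + 1)
      = (2 / (2 * (n : ℝ) + 3)) * ∑ k ∈ Finset.range (n + 1), α k * α (n - k))
    (s : ℝ) (hs : |s| < π / (2 * Real.sqrt 2)) :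
    HasSum (fun n : ℕ => α n * s ^ (2 * n + 1))
      ((1 / Real.sqrt 2) * Real.tan (Real.sqrt 2 * s)) := by
  have hb' := AdomianAux.alpha_bdd h0 hrec
  have hb : ∀ n, |α n| ≤ 1 := fun n => abs_le.mpr ⟨by linarith [(hb' n).1], (hb' n).2⟩
  have sqrt2_pos : (0:ℝ) < Real.sqrt 2 := Real.sqrt_pos.mpr (by norm_num)
  have hsq2 : (Real.sqrt 2) ^ 2 = 2 := Real.sq_sqrt (by norm_num)
  set R : ℝ := π / (2 * Real.sqrt 2) with hR
  have hRpos : 0 < R := div_pos Real.pi_pos (by positivity)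
  have hR1 : 1 < R := by
    rw [hR, lt_div_iff₀ (by positivity)]
    nlinarith [Real.pi_gt_three]
  -- complex coefficient sequence
  set c : ℕ → ℂ := fun n => if Odd n then ((α (n / 2) : ℝ) : ℂ) else 0 with hc
  have hceven : ∀ n : ℕ, Even n → c n = 0 := by
    intro n hn
    simp only [hc]
    rw [if_neg (Nat.not_odd_iff_even.mpr hn)]
  have hcodd : ∀ m : ℕ, c (2*m+1) = ((α m : ℝ) : ℂ) := by
    intro m
    simp only [hc]
    rw [if_pos ⟨m, by omega⟩, show (2*m+1)/2 = m by omega]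
  set Q := FormalMultilinearSeries.ofScalars ℂ c with hQdef
  have hQnorm : ∀ n, ‖Q n‖ ≤ 1 := by
    intro n
    rw [hQdef, FormalMultilinearSeries.ofScalars_norm]
    by_cases hn : Odd n
    · simp only [hc]
      rw [if_pos hn]
      simpa using hb (n/2)
    · simp [hc, hn]
  have hQrad : (1 : ENNReal) ≤ Q.radius := by
    have := Q.le_radius_of_bound 1 (r := 1) (fun n => by simpa using hQnorm n)
    simpa using this
  have hQball : HasFPowerSeriesOnBall Q.sum Q 0 1 :=
    (Q.hasFPowerSeriesOnBall (lt_of_lt_of_le zero_lt_one hQrad)).mono zero_lt_one hQrad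
  -- reindexing over odd integers
  have hodd_iff : ∀ (z a : ℂ), HasSum (fun m : ℕ => ((α m : ℝ) : ℂ) * z ^ (2*m+1)) a
      ↔ HasSum (fun n : ℕ => c n * z ^ n) a := by
    intro z a
    have hinj : Function.Injective (fun m : ℕ => 2*m+1) := by
      intro a b h
      simp only [] at h
      omega
    have hzero : ∀ n ∉ Set.range (fun m : ℕ => 2*m+1), c n * z ^ n = 0 := by
      intro n hn
      have : Even n := by
        rcases Nat.even_or_odd n with h | h
        · exact h
        · exfalso
          obtain ⟨m, hm⟩ := h
          exact hn ⟨m, show 2*m+1 = n by omega⟩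
      rw [hceven n this, zero_mul]
    have hiff := Function.Injective.hasSum_iff (f := fun n => c n * z ^ n) (a := a) hinj hzero
    rw [← hiff]
    have hcomp : ((fun n => c n * z ^ n) ∘ fun m : ℕ => 2*m+1)
        = fun m : ℕ => ((α m : ℝ) : ℂ) * z ^ (2*m+1) := by
      funext m
      simp only [Function.comp]
      rw [hcodd m]
    rw [hcomp]
  -- the target holomorphic function
  set T : ℂ → ℂ := fun z => (((Real.sqrt 2 : ℝ) : ℂ))⁻¹ * Complex.tan (((Real.sqrt 2 : ℝ) : ℂ) * z)
    with hT
  -- Q.sum agrees with T on small real points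
  have hreal_eq : ∀ x : ℝ, |x| < 1 → Q.sum ((x : ℝ) : ℂ) = T ((x : ℝ) : ℂ) := by
    intro x hx
    have hsum : HasSum (fun m => α m * x ^ (2*m+1))
        ((Real.sqrt 2)⁻¹ * Real.tan (Real.sqrt 2 * x)) := by
      have h := ((AdomianAux.summable_norm_alpha hb hx).of_norm).hasSum
      rwa [AdomianAux.gsum_eq hb h0 hrec hx] at h
    have h1 := Complex.hasSum_ofReal.mpr hsum
    have h2 : HasSum (fun m : ℕ => ((α m : ℝ) : ℂ) * ((x:ℝ):ℂ) ^ (2*m+1)) (T ((x:ℝ):ℂ)) := by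
      convert h1 using 1
      · funext m
        push_cast
        ring
      · rw [hT]
        simp only []
        rw [show (((Real.sqrt 2:ℝ):ℂ)) * ((x:ℝ):ℂ) = ((Real.sqrt 2 * x : ℝ) : ℂ) by push_cast; ring]
        rw [← Complex.ofReal_tan]
        push_cast
        ring
    have h3 := (hodd_iff ((x:ℝ):ℂ) (T ((x:ℝ):ℂ))).mp h2
    have h4 : HasSum (fun n => Q n fun _ => ((x:ℝ):ℂ)) (T ((x:ℝ):ℂ)) := by
      convert h3 using 1
      funext n
      rw [hQdef, FormalMultilinearSeries.ofScalars_apply_eq, smul_eq_mul]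
    exact h4.tsum_eq
  -- differentiability of T on the large disk
  have hTdiff : ∀ z : ℂ, ‖z‖ < R → DifferentiableAt ℂ T z := by
    intro z hz
    have hcos : Complex.cos (((Real.sqrt 2:ℝ):ℂ) * z) ≠ 0 := by
      intro hcz
      obtain ⟨k, hk⟩ := Complex.cos_eq_zero_iff.mp hcz
      have hL : ‖((Real.sqrt 2:ℝ):ℂ) * z‖ < π / 2 := by
        rw [norm_mul, Complex.norm_real, Real.norm_eq_abs, abs_of_pos sqrt2_pos]
        calc Real.sqrt 2 * ‖z‖ < Real.sqrt 2 * R :=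
              mul_lt_mul_of_pos_left hz sqrt2_pos
          _ = π / 2 := by
              rw [hR]
              field_simp
      have hU : π / 2 ≤ ‖(2 * (k:ℂ) + 1) * (π:ℂ) / 2‖ := by
        have he : ((2 * (k:ℂ) + 1) * (π:ℂ) / 2) = (((2*k+1 : ℤ) : ℂ)) * (((π/2 : ℝ)) : ℂ) := by
          push_cast
          ring
        rw [he, norm_mul, Complex.norm_intCast, Complex.norm_real, Real.norm_eq_abs,
          abs_of_pos (by positivity : (0:ℝ) < π/2)]
        have hk1 : (1:ℝ) ≤ |((2*k+1 : ℤ) : ℝ)| := by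
          rw [← Int.cast_abs]
          exact_mod_cast Int.one_le_abs (by omega)
        nlinarith [Real.pi_pos]
      rw [hk] at hL
      linarith
    have h1 : DifferentiableAt ℂ Complex.tan (((Real.sqrt 2:ℝ):ℂ) * z) :=
      Complex.differentiableAt_tan.mpr hcos
    have h2 : DifferentiableAt ℂ (fun w : ℂ => ((Real.sqrt 2:ℝ):ℂ) * w) z :=
      differentiableAt_id.const_mul _
    exact (h1.comp z h2).const_mul _
  -- analyticity on the unit ball
  have hball_eq : Metric.eball (0:ℂ) 1 = Metric.ball (0:ℂ) 1 := by
    rw [show (1:ENNReal) = ENNReal.ofReal (1:ℝ) by simp, Metric.emetric_ball]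
  have hQan : AnalyticOnNhd ℂ Q.sum (Metric.ball (0:ℂ) 1) := by
    rw [← hball_eq]
    exact hQball.analyticOnNhd
  have hTan : AnalyticOnNhd ℂ T (Metric.ball (0:ℂ) 1) := by
    have hopen : IsOpen {z : ℂ | ‖z‖ < R} :=
      isOpen_lt continuous_norm continuous_const
    have hdOn : DifferentiableOn ℂ T {z : ℂ | ‖z‖ < R} :=
      fun z hz => (hTdiff z hz).differentiableWithinAt
    apply (hdOn.analyticOnNhd hopen).mono
    intro z hz
    simp only [Metric.mem_ball, Complex.dist_eq, sub_zero] at hz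
    simp only [Set.mem_setOf_eq]
    calc ‖z‖ < 1 := hz
      _ < R := hR1
  -- frequently equal near 0
  have hseq : Tendsto (fun n : ℕ => (((1:ℝ)/(n+2) : ℝ) : ℂ)) atTop (𝓝[≠] (0:ℂ)) := by
    apply tendsto_nhdsWithin_of_tendsto_nhds_of_eventually_within
    · have h1 : Tendsto (fun n : ℕ => (1:ℝ)/(n+2)) atTop (𝓝 0) := by
        have h2 := (tendsto_one_div_add_atTop_nhds_zero_nat (𝕜 := ℝ)).comp (tendsto_add_atTop_nat 1)
        convert h2 using 2 with n
        simp only [Function.comp]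
        push_cast
        ring
      have h3 := (Complex.continuous_ofReal.tendsto 0).comp h1
      have h4 : Tendsto (fun n : ℕ => ((((1:ℝ)/(n+2)) : ℝ) : ℂ)) atTop (𝓝 (((0:ℝ):ℂ))) := h3
      simpa using h4
    · refine Filter.Eventually.of_forall (fun n => ?_)
      simp only [Set.mem_compl_iff, Set.mem_singleton_iff]
      rw [← Ne.eq_def, Complex.ofReal_ne_zero]
      positivity
  have hfreq : ∃ᶠ z in 𝓝[≠] (0:ℂ), Q.sum z = T z := by
    apply hseq.frequently
    apply Filter.Frequently.of_forall
    intro n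
    apply hreal_eq
    rw [abs_of_pos (by positivity)]
    rw [div_lt_one (by positivity)]
    have : (0:ℝ) ≤ (n:ℝ) := Nat.cast_nonneg n
    linarith
  have hEq : Set.EqOn Q.sum T (Metric.ball (0:ℂ) 1) :=
    hQan.eqOn_of_preconnected_of_frequently_eq hTan
      (convex_ball (0:ℂ) 1).isPreconnected (Metric.mem_ball_self zero_lt_one) hfreq
  -- transfer power series to T
  have hTat : HasFPowerSeriesAt T Q 0 := by
    apply (hQball.hasFPowerSeriesAt).congr
    exact Filter.eventuallyEq_of_mem (Metric.ball_mem_nhds (0:ℂ) zero_lt_one) hEq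
  -- radius between |s| and R
  set r : ℝ := (|s| + R)/2 with hrdef
  have habs : |s| < R := hs
  have hsr : |s| < r := by rw [hrdef]; linarith
  have hrR : r < R := by rw [hrdef]; linarith
  have hr0 : 0 < r := by
    rw [hrdef]
    linarith [abs_nonneg s]
  set rn : NNReal := ⟨r, hr0.le⟩ with hrn
  have hTdOn2 : DifferentiableOn ℂ T (Metric.closedBall (0:ℂ) rn) := by
    intro z hz
    apply (hTdiff z ?_).differentiableWithinAt
    have h := Metric.mem_closedBall.mp hz
    rw [Complex.dist_eq, sub_zero] at h
    have : (rn : ℝ) = r := rfl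
    rw [this] at h
    linarith
  have hrnpos : (0:NNReal) < rn := by
    rw [← NNReal.coe_lt_coe]
    exact hr0
  have hTb := hTdOn2.hasFPowerSeriesOnBall hrnpos
  have hPQ : cauchyPowerSeries T 0 rn = Q :=
    hTb.hasFPowerSeriesAt.eq_formalMultilinearSeries hTat
  rw [hPQ] at hTb
  have hmem : ((s:ℝ):ℂ) ∈ Metric.eball (0:ℂ) (rn : ENNReal) := by
    rw [mem_emetric_ball_zero_iff, enorm_lt_coe, ← NNReal.coe_lt_coe, coe_nnnorm,
      Complex.norm_real, Real.norm_eq_abs]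
    exact hsr
  have hsumC := hTb.hasSum hmem
  rw [zero_add] at hsumC
  have hsumC2 : HasSum (fun n => c n * ((s:ℝ):ℂ)^n) (T ((s:ℝ):ℂ)) := by
    convert hsumC using 1
    · exact rfl
    funext n
    rw [hQdef, FormalMultilinearSeries.ofScalars_apply_eq, smul_eq_mul]
  have hsumodd := (hodd_iff ((s:ℝ):ℂ) (T ((s:ℝ):ℂ))).mpr hsumC2
  have hTs : T ((s:ℝ):ℂ) = (((1 / Real.sqrt 2) * Real.tan (Real.sqrt 2 * s) : ℝ) : ℂ) := by
    rw [hT]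
    simp only []
    rw [show ((Real.sqrt 2:ℝ):ℂ) * ((s:ℝ):ℂ) = ((Real.sqrt 2 * s : ℝ):ℂ) by push_cast; ring,
      ← Complex.ofReal_tan]
    push_cast
    ring
  rw [hTs] at hsumodd
  have hfinal : HasSum (fun m : ℕ => ((α m * s ^ (2*m+1) : ℝ) : ℂ))
      (((1 / Real.sqrt 2) * Real.tan (Real.sqrt 2 * s) : ℝ) : ℂ) := by
    convert hsumodd using 1
    funext m
    push_cast
    ring
  exact Complex.hasSum_ofReal.mp hfinal
end

section
/- Define ζ(s) = (1/(1−i)) · tan((1+i)s) for complex s, where tan is the complex tangent. Then ζ(0) = 0, and at every real s the function ζ (restricted to the real line) is differentiable with derivative ζ′(s) = i + 2 ζ(s)². (The complex cosine cos((1+i)s) is nonzero for all real s, so ζ is well defined on ℝ.) -/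
theorem complex_tan_riccati (ζ : ℝ → ℂ)
    (hζ : ∀ s : ℝ, ζ s = (1 / (1 - Complex.I)) * Complex.tan ((1 + Complex.I) * s)) :
    ζ 0 = 0 ∧
    (∀ s : ℝ, Complex.cos ((1 + Complex.I) * s) ≠ 0) ∧
    ∀ s : ℝ, HasDerivAt ζ (Complex.I + 2 * ζ s ^ 2) s := by
  have hcos : ∀ s : ℝ, Complex.cos ((1 + Complex.I) * s) ≠ 0 := by
    intro s h
    rw [Complex.cos_eq_zero_iff] at h
    obtain ⟨k, hk⟩ := h
    have him := congrArg Complex.im hk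
    have hre := congrArg Complex.re hk
    simp [Complex.add_im, Complex.mul_im, Complex.mul_re, Complex.add_re] at him hre
    rw [him] at hre
    have hmul : (2 * (k:ℝ) + 1) * Real.pi = 0 := by linarith
    rcases mul_eq_zero.1 hmul with h0 | h0
    · have : (2 * k + 1 : ℤ) = 0 := by exact_mod_cast h0
      omega
    · exact Real.pi_ne_zero h0
  refine ⟨by simp [hζ], hcos, fun s => ?_⟩
  have h1 : HasDerivAt (fun s : ℝ => (1 + Complex.I) * s) (1 + Complex.I) s := by
    simpa using ((hasDerivAt_id (s:ℂ)).const_mul (1 + Complex.I)).comp_ofReal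
  have h2 : HasDerivAt (fun z : ℂ => Complex.tan z) (1 / Complex.cos ((1 + Complex.I) * s) ^ 2)
      ((1 + Complex.I) * s) := Complex.hasDerivAt_tan (hcos s)
  have h3 := (h2.comp s h1).const_mul (1 / (1 - Complex.I))
  simp only [Function.comp] at h3
  rw [funext hζ]
  convert h3 using 1
  case e'_4 => rfl
  simp only [Complex.tan_eq_sin_div_cos]
  have hc := hcos s
  have hI : (1 : ℂ) - Complex.I ≠ 0 := by
    intro h
    have := congrArg Complex.im h
    simp at this
  have hs2 : Complex.sin ((1+Complex.I)*s)^2 = 1 - Complex.cos ((1+Complex.I)*s)^2 := by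
    have := Complex.sin_sq_add_cos_sq ((1+Complex.I)*s)
    linear_combination this
  field_simp
  linear_combination 2 * hs2 + (Complex.I * Complex.cos ((1+Complex.I)*s)^2 - 2 * Complex.cos ((1+Complex.I)*s)^2 + 1) * Complex.I_sq
end

section
/- Define the complex sequence (γ_n)_{n≥0} by γ_0 = i and γ_{n+1} = (2/(2n+3)) ∑_{k=0}^{n} γ_k γ_{n-k}. Then for every real s with |s| < π/(2√2), the series ∑_{n=0}^{∞} γ_n s^{2n+1} converges in ℂ and its sum ζ satisfies the identity ζ = (1/(1−i)) · tan((1+i)s); moreover, writing γ_n = α_n + i β_n with α_n, β_n real, the sequences satisfy α_0 = 0, β_0 = 1, α_{n+1} = (2/(2n+3)) ∑_{k=0}^{n} (α_k α_{n-k} − β_k β_{n-k}) and β_{n+1} = (4/(2n+3)) ∑_{k=0}^{n} α_k β_{n-k}. -/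
open Real

open Complex Finset in
/-- Uniqueness of scalar power series coefficients. -/
private lemma aux_coeff_zero {a : ℕ → ℂ} {r : ℝ} (hr : 0 < r)
    (h : ∀ z : ℂ, ‖z‖ < r → HasSum (fun n => a n * z ^ n) 0) : ∀ n, a n = 0 := by
  set p := FormalMultilinearSeries.ofScalars ℂ a with hp
  set t : NNReal := ⟨r / 2, by positivity⟩ with ht
  have hrad : (t : ENNReal) ≤ p.radius := by
    apply FormalMultilinearSeries.le_radius_of_tendsto (l := 0)
    have hs := (h ((r / 2 : ℝ) : ℂ) (by
      rw [Complex.norm_real]; rw [Real.norm_eq_abs, abs_of_pos (by positivity)]; linarith)).summable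
    have := hs.tendsto_atTop_zero.norm
    simp only [norm_zero] at this
    convert this using 2 with n
    rw [norm_mul, norm_pow, Complex.norm_real, Real.norm_eq_abs, abs_of_pos (by positivity),
      FormalMultilinearSeries.ofScalars_norm]
    rfl
  have hball : HasFPowerSeriesOnBall (fun _ : ℂ => (0 : ℂ)) p 0 t := by
    refine ⟨hrad, ENNReal.coe_pos.mpr (by rw [← NNReal.coe_pos]; show (0:ℝ) < r / 2; positivity), fun {y} hy => ?_⟩
    rw [mem_emetric_ball_zero_iff, enorm_eq_nnnorm, ENNReal.coe_lt_coe, ← NNReal.coe_lt_coe, coe_nnnorm] at hy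
    have hy2 : ‖y‖ < r := lt_of_lt_of_le hy (by show r / 2 ≤ r; linarith)
    have := h y hy2
    refine this.congr_fun fun n => ?_
    rw [hp, FormalMultilinearSeries.ofScalars_apply_eq, smul_eq_mul]
  have hz := hball.hasFPowerSeriesAt.eq_zero
  intro n
  have hn := congrFun hz n
  rw [hp] at hn
  simpa using (FormalMultilinearSeries.ofScalars_eq_zero ℂ n).mp (by simpa using hn)

private lemma aux_norm_one_add_I : ‖(1 + Complex.I : ℂ)‖ = Real.sqrt 2 := by
  rw [Complex.norm_def, Complex.normSq_apply]
  norm_num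

private lemma aux_cos_ne {z : ℂ} (hz : ‖z‖ < π / (2 * Real.sqrt 2)) :
    Complex.cos ((1 + Complex.I) * z) ≠ 0 := by
  intro h
  rw [Complex.cos_eq_zero_iff] at h
  obtain ⟨k, hk⟩ := h
  have hnorm := congrArg norm hk
  rw [norm_mul, aux_norm_one_add_I] at hnorm
  have h2 : ‖((2 * (k : ℂ) + 1) * π / 2 : ℂ)‖ = |2 * (k : ℝ) + 1| * π / 2 := by
    rw [show ((2 * (k : ℂ) + 1) * π / 2 : ℂ) = (((2 * (k:ℝ) + 1) * π / 2 : ℝ) : ℂ) by push_cast; ring,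
      Complex.norm_real, Real.norm_eq_abs, abs_div, abs_mul, abs_of_pos pi_pos]
    norm_num
  rw [h2] at hnorm
  have hk1 : (1 : ℝ) ≤ |2 * (k : ℝ) + 1| := by
    have := k.even_or_odd
    rcases le_or_gt 0 (k : ℝ) with h' | h'
    · rw [abs_of_pos (by linarith)]; linarith
    · have : (k : ℝ) ≤ -1 := by exact_mod_cast Int.le_of_lt_add_one (by exact_mod_cast h')
      rw [abs_of_neg (by linarith)]; linarith
  have hs2 : (0:ℝ) < Real.sqrt 2 := Real.sqrt_pos.mpr (by norm_num)
  have : Real.sqrt 2 * ‖z‖ < Real.sqrt 2 * (π / (2 * Real.sqrt 2)) := by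
    exact mul_lt_mul_of_pos_left hz hs2
  rw [show Real.sqrt 2 * (π / (2 * Real.sqrt 2)) = π / 2 by field_simp] at this
  nlinarith [pi_pos]

private noncomputable def auxF : ℂ → ℂ := fun z => (1 / (1 - Complex.I)) * Complex.tan ((1 + Complex.I) * z)

private lemma aux_diffF : DifferentiableOn ℂ auxF (Metric.ball 0 (π / (2 * Real.sqrt 2))) := by
  intro z hz
  rw [Metric.mem_ball, dist_zero_right] at hz
  exact (((Complex.differentiableAt_tan.mpr (aux_cos_ne hz)).comp z
    ((differentiableAt_id.const_mul _))).const_mul _).differentiableWithinAt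

private lemma aux_hasDeriv {z : ℂ} (hz : ‖z‖ < π / (2 * Real.sqrt 2)) :
    HasDerivAt auxF (Complex.I + 2 * (auxF z) ^ 2) z := by
  have hc := aux_cos_ne hz
  have h1 : HasDerivAt (fun z : ℂ => (1 + Complex.I) * z) (1 + Complex.I) z := by
    simpa using (hasDerivAt_id z).const_mul (1 + Complex.I)
  have h2 := (Complex.hasDerivAt_tan hc).comp z h1
  have h3 := h2.const_mul (1 / (1 - Complex.I))
  refine HasDerivAt.congr_deriv h3 ?_
  have hI : (1 - Complex.I) ≠ 0 := by
    intro h; have := congrArg Complex.im h; simp at this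
  have htan : (1 : ℂ) / Complex.cos ((1 + Complex.I) * z) ^ 2
      = Complex.tan ((1 + Complex.I) * z) ^ 2 + 1 := by
    have hsc := Complex.sin_sq_add_cos_sq ((1 + Complex.I) * z)
    rw [Complex.tan_eq_sin_div_cos]
    field_simp
    exact hsc.symm
  rw [htan, auxF]
  set T := Complex.tan ((1 + Complex.I) * z)
  field_simp
  ring_nf
  linear_combination (1 - Complex.I - T^2) * Complex.I_sq

private noncomputable def auxP (n : ℕ) : ℂ := (n.factorial : ℂ)⁻¹ * iteratedDeriv n auxF 0

private lemma aux_taylor {z : ℂ} (hz : ‖z‖ < π / (2 * Real.sqrt 2)) :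
    HasSum (fun n => auxP n * z ^ n) (auxF z) := by
  have H := Complex.hasSum_taylorSeries_on_ball aux_diffF
    (Metric.mem_ball.mpr (by rwa [dist_zero_right]))
  simpa [auxP, sub_zero, smul_eq_mul, mul_comm, mul_left_comm, mul_assoc] using H

private lemma aux_taylor' {z : ℂ} (hz : ‖z‖ < π / (2 * Real.sqrt 2)) :
    HasSum (fun n : ℕ => (((n : ℂ) + 1) * auxP (n + 1)) * z ^ n)
      (Complex.I + 2 * auxF z ^ 2) := by
  have hdiff' : DifferentiableOn ℂ (deriv auxF) (Metric.ball 0 (π / (2 * Real.sqrt 2))) := by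
    have hd2 : DifferentiableOn ℂ (fun z => Complex.I + 2 * auxF z ^ 2)
        (Metric.ball 0 (π / (2 * Real.sqrt 2))) :=
      ((aux_diffF.pow 2).const_mul 2).const_add _
    refine hd2.congr fun w hw => ?_
    rw [Metric.mem_ball, dist_zero_right] at hw
    exact (aux_hasDeriv hw).deriv
  have H := Complex.hasSum_taylorSeries_on_ball hdiff'
    (Metric.mem_ball.mpr (by rwa [dist_zero_right]))
  rw [(aux_hasDeriv hz).deriv] at H
  have hco : ∀ n : ℕ, (n.factorial : ℂ)⁻¹ • (z - 0) ^ n • iteratedDeriv n (deriv auxF) 0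
      = (((n : ℂ) + 1) * auxP (n + 1)) * z ^ n := by
    intro n
    rw [← iteratedDeriv_succ', auxP, sub_zero, smul_eq_mul, smul_eq_mul, Nat.factorial_succ]
    have hne : ((n.factorial : ℕ) : ℂ) ≠ 0 := Nat.cast_ne_zero.mpr (Nat.factorial_ne_zero n)
    have hne2 : ((n : ℂ) + 1) ≠ 0 := Nat.cast_add_one_ne_zero n
    push_cast
    field_simp
  rw [funext hco] at H
  exact H

open Finset in
private lemma aux_sq {z : ℂ} (hz : ‖z‖ < π / (2 * Real.sqrt 2)) :
    HasSum (fun n : ℕ => (∑ k ∈ range (n + 1), auxP k * auxP (n - k)) * z ^ n)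
      (auxF z ^ 2) := by
  have hsum := aux_taylor hz
  have hnorm : Summable (fun n => ‖auxP n * z ^ n‖) := summable_norm_iff.mpr hsum.summable
  have hmul := hasSum_sum_range_mul_of_summable_norm hnorm hnorm
  rw [hsum.tsum_eq, ← sq] at hmul
  refine hmul.congr_fun fun n => ?_
  rw [sum_mul]
  refine sum_congr rfl fun k hk => ?_
  rw [mem_range] at hk
  have hkn : k ≤ n := Nat.lt_succ_iff.mp hk
  rw [show auxP k * auxP (n - k) * z ^ n
      = auxP k * auxP (n - k) * (z ^ k * z ^ (n - k)) by
    rw [← pow_add, Nat.add_sub_cancel' hkn]]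
  ring

open Finset in
private lemma aux_rec : ∀ n : ℕ, ((n : ℂ) + 1) * auxP (n + 1)
    = (if n = 0 then Complex.I else 0) + 2 * ∑ k ∈ range (n + 1), auxP k * auxP (n - k) := by
  have hR : (0:ℝ) < π / (2 * Real.sqrt 2) := by positivity
  have h := aux_coeff_zero (a := fun n : ℕ => ((n : ℂ) + 1) * auxP (n + 1)
      - ((if n = 0 then Complex.I else 0) + 2 * ∑ k ∈ range (n + 1), auxP k * auxP (n - k)))
    hR ?_
  · intro n
    have hn := h n
    exact sub_eq_zero.mp hn
  · intro z hz
    have hI : HasSum (fun n : ℕ => (if n = 0 then Complex.I else 0) * z ^ n) Complex.I := by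
      have h0 : HasSum (fun n : ℕ => if n = 0 then Complex.I else 0) Complex.I :=
        hasSum_ite_eq 0 Complex.I
      refine h0.congr_fun fun n => ?_
      rcases Nat.eq_zero_or_pos n with h | h
      · simp [h]
      · simp [Nat.pos_iff_ne_zero.mp h]
    have h2 := (aux_sq hz).mul_left 2
    have hAdd := hI.add h2
    have hDiff := (aux_taylor' hz).sub hAdd
    rw [show Complex.I + 2 * auxF z ^ 2 - (Complex.I + 2 * auxF z ^ 2) = 0 by ring] at hDiff
    refine hDiff.congr_fun fun n => ?_
    ring

open Finset in
private lemma aux_sum_two_mul (f : ℕ → ℂ) (N : ℕ) :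
    ∑ k ∈ range (2 * N), f k = ∑ j ∈ range N, (f (2 * j) + f (2 * j + 1)) := by
  induction N with
  | zero => simp
  | succ m ih =>
    rw [show 2 * (m + 1) = 2 * m + 1 + 1 by ring, sum_range_succ, sum_range_succ, ih,
      sum_range_succ]
    ring

open Finset in
private lemma aux_key (γ : ℕ → ℂ) (h0 : γ 0 = Complex.I)
    (hrec : ∀ n : ℕ, γ (n + 1) = (2 / (2 * (n : ℂ) + 3))
      * ∑ k ∈ Finset.range (n + 1), γ k * γ (n - k)) :
    ∀ n : ℕ, auxP (2 * n) = 0 ∧ auxP (2 * n + 1) = γ n := by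
  have hp0 : auxP 0 = 0 := by
    simp [auxP, auxF, iteratedDeriv_zero]
  intro n
  induction n using Nat.strong_induction_on with
  | _ n IH =>
    match n with
    | 0 =>
      constructor
      · simpa using hp0
      · have e := aux_rec 0
        simp [hp0] at e
        simpa [h0] using e
    | (m + 1) =>
      have hIH : ∀ j, j ≤ m → auxP (2 * j) = 0 ∧ auxP (2 * j + 1) = γ j :=
        fun j hj => IH j (by omega)
      have heven : auxP (2 * (m + 1)) = 0 := by
        have e := aux_rec (2 * m + 1)
        have hsum0 : ∑ k ∈ range (2 * m + 1 + 1), auxP k * auxP (2 * m + 1 - k) = 0 := by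
          refine sum_eq_zero fun k hk => ?_
          rw [mem_range] at hk
          rcases Nat.even_or_odd k with ⟨j, hj⟩ | ⟨j, hj⟩
          · have : auxP k = 0 := by
              rw [show k = 2 * j by omega]
              exact (hIH j (by omega)).1
            rw [this, zero_mul]
          · have : auxP (2 * m + 1 - k) = 0 := by
              rw [show 2 * m + 1 - k = 2 * (m - j) by omega]
              exact (hIH (m - j) (by omega)).1
            rw [this, mul_zero]
        rw [hsum0, if_neg (by omega), mul_zero, zero_add] at e
        have hne : ((2 * m + 1 : ℕ) : ℂ) + 1 ≠ 0 := Nat.cast_add_one_ne_zero _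
        have := mul_eq_zero.mp e
        rw [show 2 * (m + 1) = 2 * m + 1 + 1 by ring]
        exact this.resolve_left hne
      refine ⟨heven, ?_⟩
      have e := aux_rec (2 * m + 2)
      have hsum : ∑ k ∈ range (2 * m + 2 + 1), auxP k * auxP (2 * m + 2 - k)
          = ∑ j ∈ range (m + 1), γ j * γ (m - j) := by
        rw [sum_range_succ, show 2 * m + 2 = 2 * (m + 1) by ring, aux_sum_two_mul,
          show auxP (2 * (m + 1)) * auxP (2 * (m + 1) - 2 * (m + 1)) = 0 by
            rw [heven, zero_mul], add_zero]
        refine sum_congr rfl fun j hj => ?_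
        rw [mem_range, Nat.lt_succ_iff] at hj
        have hz1 : auxP (2 * j) = 0 := (hIH j hj).1
        have hz2 : auxP (2 * j) * auxP (2 * (m + 1) - 2 * j) = 0 := by rw [hz1, zero_mul]
        rw [hz2, zero_add, (hIH j hj).2, show 2 * (m + 1) - (2 * j + 1) = 2 * (m - j) + 1 by omega,
          (hIH (m - j) (by omega)).2]
      rw [hsum, if_neg (by omega), zero_add] at e
      have h3 : (2 * (m : ℂ) + 3) ≠ 0 := by
        intro h; have := congrArg Complex.re h; push_cast at this; norm_num at this; linarith
      have hrecm := hrec m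
      have h2S : 2 * ∑ k ∈ range (m + 1), γ k * γ (m - k) = (2 * (m : ℂ) + 3) * γ (m + 1) := by
        rw [hrecm]; field_simp; try ring
      rw [h2S, show ((2 * m + 2 : ℕ) : ℂ) + 1 = 2 * (m : ℂ) + 3 by push_cast; ring] at e
      rw [show 2 * (m + 1) + 1 = 2 * m + 2 + 1 by ring]
      exact mul_left_cancel₀ h3 e

theorem adomian_complex_sequence_tan (γ : ℕ → ℂ) (h0 : γ 0 = Complex.I)
    (hrec : ∀ n : ℕ, γ (n + 1) = (2 / (2 * (n : ℂ) + 3))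
      * ∑ k ∈ Finset.range (n + 1), γ k * γ (n - k)) :
    (∀ s : ℝ, |s| < π / (2 * Real.sqrt 2) →
      HasSum (fun n : ℕ => γ n * (s : ℂ) ^ (2 * n + 1))
        ((1 / (1 - Complex.I)) * Complex.tan ((1 + Complex.I) * s))) ∧
    (γ 0).re = 0 ∧ (γ 0).im = 1 ∧
    (∀ n : ℕ, (γ (n + 1)).re = (2 / (2 * (n : ℝ) + 3))
      * ∑ k ∈ Finset.range (n + 1),
          ((γ k).re * (γ (n - k)).re - (γ k).im * (γ (n - k)).im)) ∧
    (∀ n : ℕ, (γ (n + 1)).im = (4 / (2 * (n : ℝ) + 3))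
      * ∑ k ∈ Finset.range (n + 1), (γ k).re * (γ (n - k)).im) := by
  have hcast : ∀ n : ℕ, (2 / (2 * (n : ℂ) + 3)) = (((2 / (2 * (n : ℝ) + 3)) : ℝ) : ℂ) := by
    intro n; push_cast; ring
  have hS : ∀ n : ℕ, (∑ k ∈ Finset.range (n + 1), γ k * γ (n - k)).re
      = ∑ k ∈ Finset.range (n + 1),
        ((γ k).re * (γ (n - k)).re - (γ k).im * (γ (n - k)).im) := by
    intro n
    rw [Complex.re_sum]
    exact Finset.sum_congr rfl fun k _ => by rw [Complex.mul_re]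
  have hSim : ∀ n : ℕ, (∑ k ∈ Finset.range (n + 1), γ k * γ (n - k)).im
      = 2 * ∑ k ∈ Finset.range (n + 1), (γ k).re * (γ (n - k)).im := by
    intro n
    rw [Complex.im_sum]
    have h1 : ∑ k ∈ Finset.range (n + 1), (γ k * γ (n - k)).im
        = (∑ k ∈ Finset.range (n + 1), (γ k).re * (γ (n - k)).im)
          + ∑ k ∈ Finset.range (n + 1), (γ k).im * (γ (n - k)).re := by
      rw [← Finset.sum_add_distrib]
      exact Finset.sum_congr rfl fun k _ => by rw [Complex.mul_im]
    have h2 : ∑ k ∈ Finset.range (n + 1), (γ k).im * (γ (n - k)).re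
        = ∑ k ∈ Finset.range (n + 1), (γ k).re * (γ (n - k)).im := by
      have hrefl := Finset.sum_range_reflect (fun j => (γ j).re * (γ (n - j)).im) (n + 1)
      simp only [Nat.add_sub_cancel] at hrefl
      rw [← hrefl]
      refine Finset.sum_congr rfl fun k hk => ?_
      rw [Finset.mem_range, Nat.lt_succ_iff] at hk
      rw [show n - (n - k) = k by omega, mul_comm]
    rw [h1, h2]; ring
  refine ⟨?_, by simp [h0], by simp [h0], ?_, ?_⟩
  · intro s hs
    have hz : ‖(s : ℂ)‖ < π / (2 * Real.sqrt 2) := by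
      rwa [Complex.norm_real, Real.norm_eq_abs]
    have hT := aux_taylor hz
    have hkey := aux_key γ h0 hrec
    have hinj : Function.Injective (fun n : ℕ => 2 * n + 1) := fun a b h => by
      simpa using h
    have hsupp : ∀ x ∉ Set.range (fun n : ℕ => 2 * n + 1),
        auxP x * (s : ℂ) ^ x = 0 := by
      intro x hx
      have hev : ∃ m, x = 2 * m := by
        rcases Nat.even_or_odd x with ⟨j, hj⟩ | ⟨j, hj⟩
        · exact ⟨j, by omega⟩
        · exact absurd ⟨j, by simp; omega⟩ hx
      obtain ⟨m, rfl⟩ := hev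
      rw [(hkey m).1, zero_mul]
    have hodd := (hinj.hasSum_iff hsupp).mpr hT
    have : auxF (s : ℂ) = (1 / (1 - Complex.I)) * Complex.tan ((1 + Complex.I) * s) := rfl
    rw [this] at hodd
    refine hodd.congr_fun fun n => ?_
    simp only [Function.comp_apply]
    rw [(hkey n).2]
  · intro n
    rw [hrec n, hcast n, Complex.re_ofReal_mul, hS n]
  · intro n
    rw [hrec n, hcast n, Complex.im_ofReal_mul, hSim n]
    have h3 : (2 * (n : ℝ) + 3) ≠ 0 := by positivity
    field_simp
    ring
end
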